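/- Every strongly surjective linear order is short: if L is strongly surjective then there is no strictly increasing ω₁-indexed sequence and no strictly decreasing ω₁-indexed sequence in L. -/

import Mathlib

/-- A linear order is strongly surjective if it surjects monotonically onto each of its
nonempty suborders. -/
def StronglySurjective (L : Type*) [LinearOrder L] : Prop :=
  ∀ S : Set L, S.Nonempty → ∃ f : L → S, Monotone f ∧ Function.Surjective f

private lemma ssNatLt (k : ℕ) : (k : Ordinal.{0}) < (Cardinal.aleph 1).ord :=
  (Ordinal.nat_lt_omega0 k).trans_le (by
    rw [← Cardinal.ord_aleph0]; exact Cardinal.ord_le_ord.mpr Cardinal.aleph0_lt_aleph_one.le)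

private lemma ssKey {L : Type*} [LinearOrder L] (hL : StronglySurjective L)
    (x : {o : Ordinal.{0} // o < (Cardinal.aleph 1).ord} → L) (hx : StrictMono x) : False := by
  let nI : ℕ → {o : Ordinal.{0} // o < (Cardinal.aleph 1).ord} := fun k => ⟨(k : Ordinal.{0}), ssNatLt k⟩
  have hnIlt : ∀ k : ℕ, nI k < nI (k + 1) := fun k => by
    show ((k : Ordinal.{0})) < ((k + 1 : ℕ) : Ordinal.{0})
    exact_mod_cast Nat.lt_succ_self k
  obtain ⟨g₁, hg₁m, hg₁s⟩ := hL (Set.range fun k => x (nI k)) ⟨x (nI 0), 0, rfl⟩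
  have hy : ∀ k : ℕ, ∃ y : L, g₁ y = ⟨x (nI (k + 1)), k + 1, rfl⟩ := fun k => hg₁s _
  choose y hy using hy
  have hcof : ∀ z : L, ∃ k, z < y k := by
    intro z
    obtain ⟨m, hm⟩ := (g₁ z).2
    refine ⟨m, ?_⟩
    by_contra h
    push_neg at h
    have h2 := hg₁m h
    rw [hy m] at h2
    have h3 : x (nI (m + 1)) ≤ x (nI m) := by
      calc x (nI (m + 1)) ≤ ((g₁ z : L)) := h2
        _ = x (nI m) := hm.symm
    exact absurd h3 (not_le.mpr (hx (hnIlt m)))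
  obtain ⟨g, hgm, hgs⟩ := hL (Set.range x) ⟨x (nI 0), nI 0, rfl⟩
  have hb : ∀ k : ℕ, ∃ β : {o : Ordinal.{0} // o < (Cardinal.aleph 1).ord}, x β = (g (y k) : L) := fun k => (g (y k)).2
  choose β hβ using hb
  have hγ : iSup (fun k => (β k).val) < (Cardinal.aleph 1).ord :=
    Cardinal.iSup_lt_ord_of_isRegular Cardinal.isRegular_aleph_one
      (by simpa using Cardinal.aleph0_lt_aleph_one) (fun k => (β k).2)
  let α : {o : Ordinal.{0} // o < (Cardinal.aleph 1).ord} := ⟨iSup (fun k => (β k).val) + 1,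
    (Cardinal.isSuccLimit_ord (Cardinal.aleph0_le_aleph 1)).succ_lt hγ⟩
  obtain ⟨z, hz⟩ := hgs ⟨x α, α, rfl⟩
  obtain ⟨k, hk⟩ := hcof z
  have h1 : x α ≤ x (β k) := by
    have h2 := hgm hk.le
    rw [hz] at h2
    calc x α ≤ ((g (y k) : L)) := h2
      _ = x (β k) := (hβ k).symm
  have h2 : α ≤ β k := hx.le_iff_le.mp h1
  have h3 : β k < α := by
    show (β k).val < iSup (fun k => (β k).val) + 1
    exact (Ordinal.le_iSup _ k).trans_lt (Order.lt_succ _)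
  exact absurd h2 h3.not_ge

private lemma ssDual {L : Type*} [LinearOrder L] (hL : StronglySurjective L) :
    StronglySurjective Lᵒᵈ := by
  intro S hS
  obtain ⟨s, hs⟩ := hS
  obtain ⟨f, hf, hsurj⟩ := hL (OrderDual.toDual ⁻¹' S) ⟨OrderDual.ofDual s, hs⟩
  refine ⟨fun a => ⟨OrderDual.toDual ((f (OrderDual.ofDual a) : L)), (f (OrderDual.ofDual a)).2⟩,
    ?_, ?_⟩
  · intro a b hab
    exact hf (hab : OrderDual.ofDual b ≤ OrderDual.ofDual a)
  · rintro ⟨t, ht⟩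
    obtain ⟨z, hz⟩ := hsurj ⟨OrderDual.ofDual t, ht⟩
    exact ⟨OrderDual.toDual z, by simp [hz]⟩

/-- Every strongly surjective linear order is short: it admits no strictly increasing
and no strictly decreasing `ω₁`-indexed sequence. -/
theorem stronglySurjective_short {L : Type*} [LinearOrder L]
    (hL : StronglySurjective L) :
    (¬ ∃ f : {o : Ordinal.{0} // o < (Cardinal.aleph 1).ord} → L, StrictMono f) ∧
    (¬ ∃ f : {o : Ordinal.{0} // o < (Cardinal.aleph 1).ord} → L, StrictAnti f) := by
  constructor
  · rintro ⟨f, hf⟩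
    exact ssKey hL f hf
  · rintro ⟨f, hf⟩
    exact ssKey (ssDual hL) (fun i => OrderDual.toDual (f i)) (fun a b h => hf h)
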